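/- arXiv:1011.2923 — 5 statements merged into one kernel-verified Lean document; each statement's English description precedes it below -/
import Mathlib

section
/- Let 𝒜 be an associative algebra, A ∈ 𝒜, and [X,Y,Z]_A the homotope triple bracket. Then for all U,V ∈ 𝒜, the operator D := [U,V,·]_A is a derivation of the triple product: D[X,Y,Z]_A = [DX,Y,Z]_A + [X,DY,Z]_A + [X,Y,DZ]_A. Hence (𝒜, [·,·,·]_A) is a Lie triple system. -/
/-- For all `U, V`, the operator `D = [U,V,·]_A` is a derivation of the homotope
triple bracket; together with antisymmetry and the cyclic identity this means
`(𝒜, [·,·,·]_A)` is a Lie triple system. -/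
theorem homotope_triple_lts {𝒜 : Type*} [Ring 𝒜] (A : 𝒜)
    (tb : 𝒜 → 𝒜 → 𝒜 → 𝒜)
    (htb : ∀ X Y Z, tb X Y Z =
      (X * A * Y * A * Z + Z * A * Y * A * X) -
      (Y * A * X * A * Z + Z * A * X * A * Y)) :
    (∀ X Y Z, tb X Y Z = - tb Y X Z) ∧
    (∀ X Y Z, tb X Y Z + tb Y Z X + tb Z X Y = 0) ∧
    (∀ U V X Y Z, tb U V (tb X Y Z) =
      tb (tb U V X) Y Z + tb X (tb U V Y) Z + tb X Y (tb U V Z)) := by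
  refine ⟨fun X Y Z => by simp only [htb]; noncomm_ring,
          fun X Y Z => by simp only [htb]; noncomm_ring,
          fun U V X Y Z => by simp only [htb]; noncomm_ring⟩
end

section
/- Let 𝒜 be an associative algebra with two commuting involutions τ and τ̃. If A belongs to any one of the four joint eigenspaces 𝒜^{(ε,δ)} = {X : τ(X) = εX, τ̃(X) = δX} (ε, δ ∈ {±1}), then all four joint eigenspaces are closed under the homotope triple bracket [X,Y,Z]_A. -/
lemma anti_key {𝒜 : Type*} [Ring 𝒜] (f : 𝒜 → 𝒜)
    (hadd : ∀ x y, f (x + y) = f x + f y)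
    (hanti : ∀ x y, f (x * y) = f y * f x)
    (a c : ℤ) (ha : a * a = 1) (hc : c * c = 1)
    (A X Y Z : 𝒜) (hA : f A = c • A) (hX : f X = a • X)
    (hY : f Y = a • Y) (hZ : f Z = a • Z) :
    f ((X * A * Y * A * Z + Z * A * Y * A * X) -
       (Y * A * X * A * Z + Z * A * X * A * Y)) =
    a • ((X * A * Y * A * Z + Z * A * Y * A * X) -
       (Y * A * X * A * Z + Z * A * X * A * Y)) := by
  have h0 : f 0 = 0 := by
    have h := hadd 0 0
    simp only [add_zero] at h
    exact (left_eq_add.mp h)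
  have hsub : ∀ x y, f (x - y) = f x - f y := by
    intro x y
    have h := hadd (x - y) y
    rw [sub_add_cancel] at h
    rw [eq_sub_iff_add_eq, ← h]
  have key : ∀ U V W : 𝒜, f U = a • U → f V = a • V → f W = a • W →
      f (U * A * V * A * W) = a • (W * A * V * A * U) := by
    intro U V W hU hV hW
    rw [hanti, hanti, hanti, hanti, hU, hV, hW, hA]
    simp only [smul_mul_assoc, mul_smul_comm, smul_smul]
    have h5 : a * c * a * c * a = a := by
      rw [show a * c * a * c * a = (a*a)*(c*c)*a by ring, ha, hc]; ring
    rw [h5]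
    congr 1
    noncomm_ring
  rw [hsub, hadd, hadd, key X Y Z hX hY hZ, key Z Y X hZ hY hX,
    key Y X Z hY hX hZ, key Z X Y hZ hX hY, smul_sub, smul_add, smul_add]
  abel

/-- If `A` lies in one of the four joint eigenspaces of two commuting involutions
`τ, σ`, then all four joint eigenspaces are closed under the homotope triple
bracket `[X,Y,Z]_A`. -/
theorem joint_eigenspaces_closed_triple {𝒜 : Type*} [Ring 𝒜]
    (τ σ : 𝒜 → 𝒜)
    (hτadd : ∀ x y, τ (x + y) = τ x + τ y)
    (hτanti : ∀ x y, τ (x * y) = τ y * τ x)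
    (hτinv : ∀ x, τ (τ x) = x)
    (hσadd : ∀ x y, σ (x + y) = σ x + σ y)
    (hσanti : ∀ x y, σ (x * y) = σ y * σ x)
    (hσinv : ∀ x, σ (σ x) = x)
    (hcomm : ∀ x, τ (σ x) = σ (τ x))
    (A : 𝒜)
    (hA : ∃ s t : ℤ, (s = 1 ∨ s = -1) ∧ (t = 1 ∨ t = -1) ∧
      τ A = s • A ∧ σ A = t • A)
    (tb : 𝒜 → 𝒜 → 𝒜 → 𝒜)
    (htb : ∀ X Y Z, tb X Y Z =
      (X * A * Y * A * Z + Z * A * Y * A * X) -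
      (Y * A * X * A * Z + Z * A * X * A * Y)) :
    ∀ s t : ℤ, (s = 1 ∨ s = -1) → (t = 1 ∨ t = -1) →
      ∀ X Y Z : 𝒜,
        (τ X = s • X ∧ σ X = t • X) →
        (τ Y = s • Y ∧ σ Y = t • Y) →
        (τ Z = s • Z ∧ σ Z = t • Z) →
        τ (tb X Y Z) = s • tb X Y Z ∧ σ (tb X Y Z) = t • tb X Y Z := by
  obtain ⟨sA, tA, hsA, htA, hτA, hσA⟩ := hA
  have hsA2 : sA * sA = 1 := by rcases hsA with h | h <;> simp [h]
  have htA2 : tA * tA = 1 := by rcases htA with h | h <;> simp [h]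
  intro s t hs ht X Y Z hX hY hZ
  have hs2 : s * s = 1 := by rcases hs with h | h <;> simp [h]
  have ht2 : t * t = 1 := by rcases ht with h | h <;> simp [h]
  rw [htb]
  exact ⟨anti_key τ hτadd hτanti s sA hs2 hsA2 A X Y Z hτA hX.1 hY.1 hZ.1,
    anti_key σ hσadd hσanti t tA ht2 htA2 A X Y Z hσA hX.2 hY.2 hZ.2⟩
end

section
/- Let 𝒜 be a unital associative algebra and A ∈ 𝒜. Then the set G_A := {X ∈ 𝒜 : 1 − XA is invertible} is a group under the product X ∘_A Y := X + Y − XAY, with identity element 0 and inverse j_A(X) = −(1 − XA)^{-1} X. -/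
/-- `G_A = {X : 1 - XA invertible}` is a group under `X ∘_A Y = X + Y - XAY`,
with identity `0` and inverse `j_A(X) = -(1 - XA)⁻¹ X`. -/
theorem GA_group {𝒜 : Type*} [Ring 𝒜] (A : 𝒜)
    (G : Set 𝒜) (hG : G = {X : 𝒜 | IsUnit (1 - X * A)})
    (m : 𝒜 → 𝒜 → 𝒜) (hm : ∀ X Y, m X Y = X + Y - X * A * Y)
    (j : 𝒜 → 𝒜) (hj : ∀ X, j X = -(Ring.inverse (1 - X * A) * X)) :
    (0 ∈ G) ∧
    (∀ X Y, X ∈ G → Y ∈ G → m X Y ∈ G) ∧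
    (∀ X, X ∈ G → j X ∈ G) ∧
    (∀ X Y Z : 𝒜, m (m X Y) Z = m X (m Y Z)) ∧
    (∀ X : 𝒜, m X 0 = X) ∧
    (∀ X : 𝒜, m 0 X = X) ∧
    (∀ X, X ∈ G → m X (j X) = 0) ∧
    (∀ X, X ∈ G → m (j X) X = 0) := by
  subst hG
  refine ⟨by simp, ?_, ?_, ?_, ?_, ?_, ?_, ?_⟩
  · intro X Y hX hY
    have key : 1 - m X Y * A = (1 - X * A) * (1 - Y * A) := by
      rw [hm]; noncomm_ring
    simp only [Set.mem_setOf_eq, key]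
    exact hX.mul hY
  · intro X hX
    have key : 1 - j X * A = Ring.inverse (1 - X * A) := by
      rw [hj, neg_mul, sub_neg_eq_add, mul_assoc]
      nth_rewrite 1 [← Ring.inverse_mul_cancel _ hX]
      rw [← mul_add]
      noncomm_ring
    simp only [Set.mem_setOf_eq, key]
    exact isUnit_ringInverse.mpr hX
  · intro X Y Z; simp only [hm]; noncomm_ring
  · intro X; simp [hm]
  · intro X; simp [hm]
  · intro X hX
    rw [hm, hj]
    have : X * A * -(Ring.inverse (1 - X * A) * X)
        = -(X * A * Ring.inverse (1 - X * A) * X) := by noncomm_ring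
    rw [this]
    have h2 : X + -(Ring.inverse (1 - X * A) * X) - -(X * A * Ring.inverse (1 - X * A) * X)
        = X - (1 - X * A) * (Ring.inverse (1 - X * A) * X) := by noncomm_ring
    rw [h2, ← mul_assoc, Ring.mul_inverse_cancel _ hX, one_mul, sub_self]
  · intro X hX
    rw [hm, hj]
    have : -(Ring.inverse (1 - X * A) * X) + X - -(Ring.inverse (1 - X * A) * X) * A * X
        = X - Ring.inverse (1 - X * A) * ((1 - X * A) * X) := by noncomm_ring
    rw [this, ← mul_assoc, Ring.inverse_mul_cancel _ hX, one_mul, sub_self]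
end

section
/- Let 𝒜 be a unital associative algebra with involution * and A ∈ 𝒜 with A* = A. Then U_A := {X ∈ G_A : X* + X = X* A X} is a subgroup of the group (G_A, ∘_A), where G_A = {X : 1 − XA invertible} and X ∘_A Y = X + Y − XAY; moreover, for X ∈ G_A the condition X* + X = X*AX is equivalent to j_A(X) = X*, where j_A(X) = −(1 − XA)^{-1}X is the inverse in G_A. -/
/-- For a Hermitian `A` (`τ A = A`), the set
`U_A = {X ∈ G_A : τ X + X = τ X * A * X}` is a subgroup of `(G_A, ∘_A)`, and
for `X ∈ G_A` the defining condition is equivalent to `j_A(X) = τ X`. -/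
theorem UA_subgroup {𝒜 : Type*} [Ring 𝒜]
    (τ : 𝒜 → 𝒜)
    (hadd : ∀ x y, τ (x + y) = τ x + τ y)
    (hanti : ∀ x y, τ (x * y) = τ y * τ x)
    (hinv : ∀ x, τ (τ x) = x)
    (A : 𝒜) (hA : τ A = A)
    (m : 𝒜 → 𝒜 → 𝒜) (hm : ∀ X Y, m X Y = X + Y - X * A * Y)
    (j : 𝒜 → 𝒜) (hj : ∀ X, j X = -(Ring.inverse (1 - X * A) * X))
    (P : 𝒜 → Prop)
    (hP : ∀ X, P X ↔ (IsUnit (1 - X * A) ∧ τ X + X = τ X * A * X)) :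
    P 0 ∧
    (∀ X Y, P X → P Y → P (m X Y)) ∧
    (∀ X, P X → P (j X)) ∧
    (∀ X, IsUnit (1 - X * A) → (τ X + X = τ X * A * X ↔ j X = τ X)) := by
  -- basic facts about τ
  have hτ0 : τ 0 = 0 := by
    have h := hadd 0 0
    simp only [add_zero] at h
    exact left_eq_add.mp h
  have hτneg : ∀ x, τ (-x) = -τ x := by
    intro x
    have h := hadd x (-x)
    simp only [add_neg_cancel, hτ0] at h
    exact (neg_eq_of_add_eq_zero_right h.symm).symm
  have hτsub : ∀ x y, τ (x - y) = τ x - τ y := by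
    intro x y
    rw [sub_eq_add_neg, hadd, hτneg, ← sub_eq_add_neg]
  -- group laws for m
  have massoc : ∀ a b c, m (m a b) c = m a (m b c) := by
    intro a b c; simp only [hm]; noncomm_ring
  have m0l : ∀ a, m 0 a = a := by intro a; simp [hm]
  have m0r : ∀ a, m a 0 = a := by intro a; simp [hm]
  -- inverse laws
  have hmXj : ∀ X, IsUnit (1 - X * A) → m X (j X) = 0 := by
    intro X hU
    have hB' : (1 - X * A) * Ring.inverse (1 - X * A) = 1 := Ring.mul_inverse_cancel _ hU
    have h1 : (1 - X * A) * (Ring.inverse (1 - X * A) * X) = X := by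
      rw [← mul_assoc, hB', one_mul]
    have h2 : m X (j X) = X - (1 - X * A) * (Ring.inverse (1 - X * A) * X) := by
      rw [hm, hj]; noncomm_ring
    rw [h2, h1, sub_self]
  have hmjX : ∀ X, IsUnit (1 - X * A) → m (j X) X = 0 := by
    intro X hU
    have hB : Ring.inverse (1 - X * A) * (1 - X * A) = 1 := Ring.inverse_mul_cancel _ hU
    have h1 : Ring.inverse (1 - X * A) * ((1 - X * A) * X) = X := by
      rw [← mul_assoc, hB, one_mul]
    have h2 : m (j X) X = X - Ring.inverse (1 - X * A) * ((1 - X * A) * X) := by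
      rw [hm, hj]; noncomm_ring
    rw [h2, h1, sub_self]
  -- the equivalence (fourth conjunct), proved first
  have hiff : ∀ X, IsUnit (1 - X * A) → (τ X + X = τ X * A * X ↔ j X = τ X) := by
    intro X hU
    constructor
    · intro hc
      have hL : m (τ X) X = 0 := by rw [hm, hc, sub_self]
      calc j X = m 0 (j X) := (m0l _).symm
        _ = m (m (τ X) X) (j X) := by rw [hL]
        _ = m (τ X) (m X (j X)) := massoc _ _ _
        _ = m (τ X) 0 := by rw [hmXj X hU]
        _ = τ X := m0r _
    · intro hjτ
      have h := hmjX X hU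
      rw [hjτ, hm] at h
      exact sub_eq_zero.mp h
  refine ⟨?_, ?_, ?_, hiff⟩
  · rw [hP]
    constructor
    · simp
    · simp [hτ0]
  · intro X Y hX hY
    rw [hP] at hX hY ⊢
    obtain ⟨hUX, hcX⟩ := hX
    obtain ⟨hUY, hcY⟩ := hY
    constructor
    · have h2 : 1 - m X Y * A = (1 - X * A) * (1 - Y * A) := by rw [hm]; noncomm_ring
      rw [h2]; exact hUX.mul hUY
    · have hτm : τ (m X Y) = τ X + τ Y - τ Y * A * τ X := by
        rw [hm, hτsub, hadd, hanti, hanti, hA, ← mul_assoc]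
      have key : τ (m X Y) * A * m X Y - (τ (m X Y) + m X Y) =
          (1 - τ Y * A) * (τ X * A * X - (τ X + X)) * (1 - A * Y) +
            (τ Y * A * Y - (τ Y + Y)) := by
        rw [hτm, hm]; noncomm_ring
      have hz : τ (m X Y) * A * m X Y - (τ (m X Y) + m X Y) = 0 := by
        rw [key, ← hcX, ← hcY]; simp
      exact (sub_eq_zero.mp hz).symm
  · intro X hPX
    rw [hP] at hPX ⊢
    obtain ⟨hU, hc⟩ := hPX
    have hjτ : j X = τ X := (hiff X hU).mp hc
    have hB : Ring.inverse (1 - X * A) * (1 - X * A) = 1 := Ring.inverse_mul_cancel _ hU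
    have hB' : (1 - X * A) * Ring.inverse (1 - X * A) = 1 := Ring.mul_inverse_cancel _ hU
    have hBinv : 1 - j X * A = Ring.inverse (1 - X * A) := by
      calc 1 - j X * A
          = 1 - (Ring.inverse (1 - X * A) * (1 - X * A) - Ring.inverse (1 - X * A)) := by
            rw [hj]; noncomm_ring
        _ = Ring.inverse (1 - X * A) := by rw [hB]; noncomm_ring
    have hUj : IsUnit (1 - j X * A) := by
      rw [hBinv]; exact isUnit_ringInverse.mpr hU
    refine ⟨hUj, ?_⟩
    apply (hiff (j X) hUj).mpr
    have hinvinv : Ring.inverse (1 - j X * A) = 1 - X * A := by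
      rw [hBinv]
      obtain ⟨u, hu⟩ := id hU
      rw [← hu, Ring.inverse_unit, Ring.inverse_unit, inv_inv]
    have hjj : j (j X) = X := by
      rw [hj (j X), hinvinv, hj X]
      calc -((1 - X * A) * -(Ring.inverse (1 - X * A) * X))
          = (1 - X * A) * Ring.inverse (1 - X * A) * X := by noncomm_ring
        _ = X := by rw [hB', one_mul]
    rw [hjj, hjτ, hinv]
end

section
/- Let 𝒜 be a unital associative algebra with involution * and A ∈ 𝒜 with A* = −A. Then S_A := {X ∈ G_A : X* − X = X* A X} is a subgroup of the group (G_A, ∘_A), where G_A = {X : 1 − XA invertible} and X ∘_A Y = X + Y − XAY; for X ∈ G_A the condition X* − X = X*AX is equivalent to j_A(X) = −X*, with j_A(X) = −(1 − XA)^{-1}X. -/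
private lemma SA_aux_v {𝒜 : Type*} [Ring 𝒜] (A X : 𝒜) (u : 𝒜ˣ)
    (hu : (↑u : 𝒜) = 1 - X * A) :
    ∃ v : 𝒜ˣ, ((↑v : 𝒜) = 1 - A * X ∧ (↑u⁻¹ : 𝒜) * X = X * ↑v⁻¹) := by
  set t : 𝒜 := (↑u⁻¹ : 𝒜) * X with ht
  have h : (1 - X * A) * t = X := by rw [ht, ← hu, ← mul_assoc, u.mul_inv, one_mul]
  have h3 : X * A * t = t - X := by
    have h2 : t - X * A * t = X := by
      calc t - X * A * t = (1 - X * A) * t := by noncomm_ring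
        _ = X := h
    have h2' : t = X + X * A * t := sub_eq_iff_eq_add.mp h2
    exact eq_sub_of_add_eq (by rw [add_comm]; exact h2'.symm)
  have h4 : t * A * X = t - X := by
    have hXA : (X * A : 𝒜) = 1 - ↑u := by rw [hu]; abel
    calc t * A * X = ↑u⁻¹ * (X * A) * X := by rw [ht]; noncomm_ring
      _ = ↑u⁻¹ * (1 - ↑u) * X := by rw [hXA]
      _ = t - X := by rw [mul_sub, mul_one, u.inv_mul, sub_mul, one_mul, ht]
  have p1 : (1 - A * X) * (1 + A * t) = 1 := by
    calc (1 - A * X) * (1 + A * t) = 1 + A * t - A * X - A * (X * A * t) := by noncomm_ring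
      _ = 1 + A * t - A * X - A * (t - X) := by rw [h3]
      _ = 1 := by noncomm_ring
  have p2 : (1 + A * t) * (1 - A * X) = 1 := by
    calc (1 + A * t) * (1 - A * X) = 1 - A * X + A * t - A * (t * A * X) := by noncomm_ring
      _ = 1 - A * X + A * t - A * (t - X) := by rw [h4]
      _ = 1 := by noncomm_ring
  refine ⟨⟨1 - A * X, 1 + A * t, p1, p2⟩, rfl, ?_⟩
  set v : 𝒜ˣ := ⟨1 - A * X, 1 + A * t, p1, p2⟩ with hvdef
  have hv : (↑v : 𝒜) = 1 - A * X := rfl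
  have hXv : X * (↑v : 𝒜) = ↑u * X := by rw [hv, hu]; noncomm_ring
  calc (↑u⁻¹ : 𝒜) * X = ↑u⁻¹ * (X * ↑v) * ↑v⁻¹ := by
        rw [mul_assoc (↑u⁻¹ : 𝒜), mul_assoc, v.mul_inv, mul_one]
    _ = ↑u⁻¹ * (↑u * X) * ↑v⁻¹ := by rw [hXv]
    _ = X * ↑v⁻¹ := by rw [← mul_assoc, u.inv_mul, one_mul]

private lemma SA_key {𝒜 : Type*} [Ring 𝒜] (A X t : 𝒜) (hX : IsUnit (1 - X * A)) :
    (t - X = t * A * X ↔ Ring.inverse (1 - X * A) * X = t) := by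
  obtain ⟨v, hv, huv⟩ := SA_aux_v A X hX.unit hX.unit_spec
  have hRi : Ring.inverse (1 - X * A) = (↑hX.unit⁻¹ : 𝒜) := by
    conv_lhs => rw [← hX.unit_spec]
    rw [Ring.inverse_unit]
  rw [hRi, huv]
  constructor
  · intro h
    have h1 : t * ↑v = X := by
      calc t * (↑v : 𝒜) = t - t * A * X := by rw [hv]; noncomm_ring
        _ = t - (t - X) := by rw [← h]
        _ = X := by abel
    rw [← h1, mul_assoc, v.mul_inv, mul_one]
  · intro h
    have h1 : X = t * ↑v := by rw [← h, mul_assoc, v.inv_mul, mul_one]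
    calc t - X = t - t * ↑v := by rw [h1]
      _ = t * A * X := by rw [hv]; noncomm_ring

/-- For a skew-Hermitian `A` (`τ A = -A`), the set
`S_A = {X ∈ G_A : τ X - X = τ X * A * X}` is a subgroup of `(G_A, ∘_A)`, and
for `X ∈ G_A` the defining condition is equivalent to `j_A(X) = -τ X`. -/
theorem SA_subgroup {𝒜 : Type*} [Ring 𝒜]
    (τ : 𝒜 → 𝒜)
    (hadd : ∀ x y, τ (x + y) = τ x + τ y)
    (hanti : ∀ x y, τ (x * y) = τ y * τ x)
    (hinv : ∀ x, τ (τ x) = x)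
    (A : 𝒜) (hA : τ A = -A)
    (m : 𝒜 → 𝒜 → 𝒜) (hm : ∀ X Y, m X Y = X + Y - X * A * Y)
    (j : 𝒜 → 𝒜) (hj : ∀ X, j X = -(Ring.inverse (1 - X * A) * X))
    (P : 𝒜 → Prop)
    (hP : ∀ X, P X ↔ (IsUnit (1 - X * A) ∧ τ X - X = τ X * A * X)) :
    P 0 ∧
    (∀ X Y, P X → P Y → P (m X Y)) ∧
    (∀ X, P X → P (j X)) ∧
    (∀ X, IsUnit (1 - X * A) → (τ X - X = τ X * A * X ↔ j X = -τ X)) := by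
  -- basic facts about τ
  have h0 : τ 0 = 0 := by
    have h := hadd 0 0
    rw [add_zero] at h
    exact (left_eq_add.mp h)
  have hneg : ∀ x, τ (-x) = -τ x := by
    intro x
    have h := hadd x (-x)
    rw [add_neg_cancel, h0] at h
    exact eq_neg_of_add_eq_zero_right h.symm
  -- part 4
  have part4 : ∀ X, IsUnit (1 - X * A) → (τ X - X = τ X * A * X ↔ j X = -τ X) := by
    intro X hX
    rw [hj, neg_inj]
    exact SA_key A X (τ X) hX
  refine ⟨?_, ?_, ?_, part4⟩
  · -- P 0
    rw [hP]
    refine ⟨by simp, by simp [h0]⟩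
  · -- closure under m
    intro X Y hX hY
    rw [hP] at hX hY ⊢
    obtain ⟨hXu, hXc⟩ := hX
    obtain ⟨hYu, hYc⟩ := hY
    set u : 𝒜ˣ := hXu.unit with hudef
    set w : 𝒜ˣ := hYu.unit with hwdef
    have hu : (↑u : 𝒜) = 1 - X * A := hXu.unit_spec
    have hw : (↑w : 𝒜) = 1 - Y * A := hYu.unit_spec
    have hRiX : Ring.inverse (1 - X * A) = (↑u⁻¹ : 𝒜) := by
      conv_lhs => rw [← hu]
      rw [Ring.inverse_unit]
    have hRiY : Ring.inverse (1 - Y * A) = (↑w⁻¹ : 𝒜) := by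
      conv_lhs => rw [← hw]
      rw [Ring.inverse_unit]
    have hX' : (↑u⁻¹ : 𝒜) * X = τ X := by
      rw [← hRiX]; exact (SA_key A X (τ X) hXu).mp hXc
    have hY' : (↑w⁻¹ : 𝒜) * Y = τ Y := by
      rw [← hRiY]; exact (SA_key A Y (τ Y) hYu).mp hYc
    have hm1 : 1 - m X Y * A = (↑(u * w) : 𝒜) := by
      rw [hm, Units.val_mul, hu, hw]; noncomm_ring
    have hunit : IsUnit (1 - m X Y * A) := by rw [hm1]; exact (u * w).isUnit
    refine ⟨hunit, (SA_key A (m X Y) (τ (m X Y)) hunit).mpr ?_⟩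
    have hRim : Ring.inverse (1 - m X Y * A) = (↑(u * w)⁻¹ : 𝒜) := by
      rw [hm1, Ring.inverse_unit]
    -- compute τ (m X Y)
    have hτm : τ (m X Y) = τ X + τ Y + τ Y * A * τ X := by
      rw [hm, show X + Y - X * A * Y = X + Y + -(X * A * Y) by abel,
        hadd, hadd, hneg, hanti, hanti, hA]
      noncomm_ring
    -- compute the inverse times m X Y
    have hYe : (↑w : 𝒜) * τ Y = Y := by rw [← hY', ← mul_assoc, w.mul_inv, one_mul]
    have hstep : (↑w⁻¹ : 𝒜) * τ X = τ X + τ Y * A * τ X := by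
      have h2 : (↑w : 𝒜) * (τ X + τ Y * A * τ X) = τ X := by
        calc (↑w : 𝒜) * (τ X + τ Y * A * τ X)
            = ↑w * τ X + (↑w * τ Y) * A * τ X := by noncomm_ring
          _ = ↑w * τ X + Y * A * τ X := by rw [hYe]
          _ = τ X := by rw [hw]; noncomm_ring
      calc (↑w⁻¹ : 𝒜) * τ X = ↑w⁻¹ * (↑w * (τ X + τ Y * A * τ X)) := by rw [h2]
        _ = τ X + τ Y * A * τ X := by rw [← mul_assoc, w.inv_mul, one_mul]
    calc Ring.inverse (1 - m X Y * A) * m X Y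
        = ↑w⁻¹ * (↑u⁻¹ * (X + ↑u * Y)) := by
          rw [hRim, hm, show X + Y - X * A * Y = X + ↑u * Y by rw [hu]; noncomm_ring,
            mul_inv_rev, Units.val_mul, mul_assoc]
      _ = ↑w⁻¹ * (τ X + Y) := by rw [mul_add, hX', ← mul_assoc, u.inv_mul, one_mul]
      _ = (τ X + τ Y * A * τ X) + τ Y := by rw [mul_add, hY', hstep]
      _ = τ (m X Y) := by rw [hτm]; abel
  · -- closure under j
    intro X hX
    rw [hP] at hX ⊢
    obtain ⟨hXu, hXc⟩ := hX
    set u : 𝒜ˣ := hXu.unit with hudef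
    have hu : (↑u : 𝒜) = 1 - X * A := hXu.unit_spec
    have hRiX : Ring.inverse (1 - X * A) = (↑u⁻¹ : 𝒜) := by
      conv_lhs => rw [← hu]
      rw [Ring.inverse_unit]
    have hX' : (↑u⁻¹ : 𝒜) * X = τ X := by
      rw [← hRiX]; exact (SA_key A X (τ X) hXu).mp hXc
    have hjX : j X = -τ X := by rw [hj, hRiX, hX']
    have haux : (↑u : 𝒜) + X * A = 1 := by rw [hu]; abel
    have h1 : 1 - j X * A = (↑u⁻¹ : 𝒜) := by
      rw [hj, hRiX]
      calc 1 - -((↑u⁻¹ : 𝒜) * X) * A = ↑u⁻¹ * ↑u + ↑u⁻¹ * (X * A) := by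
            rw [u.inv_mul]; noncomm_ring
        _ = ↑u⁻¹ * (↑u + X * A) := by rw [mul_add]
        _ = ↑u⁻¹ := by rw [haux, mul_one]
    have hunit : IsUnit (1 - j X * A) := by rw [h1]; exact (u⁻¹).isUnit
    refine ⟨hunit, (SA_key A (j X) (τ (j X)) hunit).mpr ?_⟩
    calc Ring.inverse (1 - j X * A) * j X = ↑u * j X := by
          rw [h1, Ring.inverse_unit, inv_inv]
      _ = ↑u * -((↑u⁻¹ : 𝒜) * X) := by rw [hj, hRiX]
      _ = -X := by rw [mul_neg, ← mul_assoc, u.mul_inv, one_mul]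
      _ = τ (j X) := by rw [hjX, hneg, hinv]
end
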